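/- With B(z) = A₋₁ + z(A₀-I) + z²A₁, ξ ≠ 0, u ≠ 0 with B(ξ)u = 0, Q = uvᵀ with vᵀu = 1: det(I + (ξ/(z-ξ))Q) = z/(z-ξ) for all z ≠ ξ, and hence det B_r(z) = (z/(z-ξ)) det B(z) where B_r(z) = A₋₁(I-Q) + z(A₀ + ξA₁Q - I) + z²A₁; in particular the roots of det B_r are those of det B with one root ξ replaced by 0. -/

import Mathlib

open Matrix

/-- With `B(ξ)u = 0`, `ξ ≠ 0`, `u ≠ 0`, `Q = uvᵀ`, `vᵀu = 1`:
`det(I + (ξ/(z-ξ))Q) = z/(z-ξ)` and `det B_r(z) = (z/(z-ξ)) det B(z)`,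
where `B_r(z) = Am1(I-Q) + z(A₀ + ξA₁Q - I) + z²A₁`. -/
theorem right_shift_det {n : ℕ} (Am1 A₀ A₁ : Matrix (Fin n) (Fin n) ℂ)
    (ξ : ℂ) (hξ : ξ ≠ 0) (u v : Fin n → ℂ) (hu : u ≠ 0) (huv : v ⬝ᵥ u = 1)
    (hB : Am1.mulVec u + ξ • (A₀ - 1).mulVec u + ξ ^ 2 • A₁.mulVec u = 0)
    (z : ℂ) (hz : z ≠ ξ) :
    (1 + (ξ / (z - ξ)) • vecMulVec u v).det = z / (z - ξ) ∧
    (Am1 * (1 - vecMulVec u v) + z • (A₀ + ξ • (A₁ * vecMulVec u v) - 1)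
        + z ^ 2 • A₁).det
      = (z / (z - ξ)) * (Am1 + z • (A₀ - 1) + z ^ 2 • A₁).det := by
  have hzξ : z - ξ ≠ 0 := sub_ne_zero.mpr hz
  set c : ℂ := ξ / (z - ξ) with hc
  -- smul of vecMulVec
  have hsm : c • vecMulVec u v = vecMulVec (c • u) v := by
    ext i j
    simp [vecMulVec_apply, mul_assoc]
  have hdet1 : (1 + c • vecMulVec u v).det = z / (z - ξ) := by
    rw [hsm, vecMulVec_eq (Fin 1), det_one_add_replicateCol_mul_replicateRow]
    have : v ⬝ᵥ (c • u) = c := by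
      rw [dotProduct_smul, huv, smul_eq_mul, mul_one]
    rw [this, hc]
    field_simp
    ring
  refine ⟨hdet1, ?_⟩
  have hQ : ∀ (M : Matrix (Fin n) (Fin n) ℂ),
      M * vecMulVec u v = vecMulVec (M.mulVec u) v := by
    intro M
    ext i j
    simp [mul_apply, vecMulVec_apply, mulVec, dotProduct, Finset.sum_mul, mul_assoc]
  have key : Am1 * (1 - vecMulVec u v) + z • (A₀ + ξ • (A₁ * vecMulVec u v) - 1)
        + z ^ 2 • A₁
      = (Am1 + z • (A₀ - 1) + z ^ 2 • A₁) * (1 + c • vecMulVec u v) := by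
    rw [mul_add, mul_one, Matrix.mul_smul, hQ, hQ, mul_sub, mul_one]
    ext i j
    have hBi := congrFun hB i
    simp only [Pi.add_apply, Pi.smul_apply, Pi.zero_apply, smul_eq_mul,
      Matrix.sub_mulVec, Matrix.add_mulVec, Matrix.smul_mulVec,
      Matrix.one_mulVec] at hBi ⊢
    simp only [Matrix.add_apply, Matrix.sub_apply, Matrix.smul_apply,
      vecMulVec_apply, Matrix.one_apply, smul_eq_mul, Pi.add_apply,
      Pi.smul_apply, Pi.sub_apply]
    have hcz : c * (z - ξ) = ξ := by rw [hc]; field_simp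
    rw [hQ Am1, vecMulVec_apply, hc]
    simp only [Pi.sub_apply] at hBi ⊢
    field_simp
    linear_combination (-(z * v j)) * hBi
  rw [key, det_mul, hdet1, mul_comm]
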